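/- arXiv:1209.1971 — 3 statements merged into one kernel-verified Lean document; each statement's English description precedes it below -/
import Mathlib

section
/- Let n ≥ 1 and k ∈ ℕ, and let (A_{α₁…α_k}), with indices α_i ∈ {0, 1, …, n}, be a family of real numbers that is symmetric under all permutations of its k indices. If for all β₁, …, β_{k+2} ∈ {0, 1, …, n} the total symmetrization vanishes, i.e. Σ_{σ ∈ S_{k+2}} A_{β_{σ(1)}…β_{σ(k)}} η_{β_{σ(k+1)} β_{σ(k+2)}} = 0, then A_{α₁…α_k} = 0 for all indices. -/
/-- The Minkowski metric η on ℝ^{n+1}: η_{μν} is −1 if μ = ν = 0, 1 if μ = ν ≥ 1, else 0. -/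
noncomputable def etaM (n : ℕ) (μ ν : Fin (n + 1)) : ℝ :=
  if μ = ν then (if μ = 0 then -1 else 1) else 0

open MvPolynomial in
lemma prodX_eq_monomial {V : Type*} [DecidableEq V] {ι : Type*} (s : Finset ι) (f : ι → V) :
    (∏ i ∈ s, (X (f i) : MvPolynomial V ℝ)) = monomial (∑ i ∈ s, Finsupp.single (f i) 1) 1 := by
  classical
  induction s using Finset.induction with
  | empty => simp
  | insert _ _ h ih =>
      rw [Finset.prod_insert h, Finset.sum_insert h, ih, X, monomial_mul, one_mul]

private lemma sum_factor {ιa ιb ιc : Type*} [Fintype ιa] [Fintype ιb] [Fintype ιc]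
    (f : ιa → ℝ) (g : ιb → ιc → ℝ) :
    (∑ a, f a) * (∑ b, ∑ c, g b c) = ∑ c, ∑ b, ∑ a, f a * g b c := by
  calc (∑ a, f a) * (∑ b, ∑ c, g b c)
      = ∑ b, ∑ c, ∑ a, f a * g b c := by
        rw [Finset.mul_sum]
        exact Finset.sum_congr rfl fun b _ => by
          rw [Finset.mul_sum]
          exact Finset.sum_congr rfl fun c _ => Finset.sum_mul _ _ _
    _ = ∑ c, ∑ b, ∑ a, f a * g b c := Finset.sum_comm

lemma castAdd_two_eq {k : ℕ} (i : Fin k) :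
    (Fin.castAdd 2 i : Fin (k + 2)) = i.castSucc.castSucc := rfl

lemma mk_k_eq {k : ℕ} : (⟨k, by omega⟩ : Fin (k + 2)) = (Fin.last k).castSucc := rfl

lemma mk_k1_eq {k : ℕ} : (⟨k + 1, by omega⟩ : Fin (k + 2)) = Fin.last (k + 1) := rfl

/-- if a totally symmetric family `A_{α₁…α_k}` satisfies
`Σ_{σ ∈ S_{k+2}} A_{β_{σ(1)}…β_{σ(k)}} η_{β_{σ(k+1)} β_{σ(k+2)}} = 0` for all
indices `β₁,…,β_{k+2}`, then `A = 0`. -/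
theorem symmetrization_eta_eq_zero (n k : ℕ) (hn : 1 ≤ n)
    (A : (Fin k → Fin (n + 1)) → ℝ)
    (hsymm : ∀ (σ : Equiv.Perm (Fin k)) (α : Fin k → Fin (n + 1)), A (α ∘ σ) = A α)
    (h : ∀ β : Fin (k + 2) → Fin (n + 1),
      ∑ σ : Equiv.Perm (Fin (k + 2)),
        A (fun i : Fin k => β (σ (Fin.castAdd 2 i))) *
          etaM n (β (σ ⟨k, by omega⟩)) (β (σ ⟨k + 1, by omega⟩)) = 0) :
    ∀ α : Fin k → Fin (n + 1), A α = 0 := by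
  classical
  -- Step 1: pointwise polynomial identity
  have key : ∀ x : Fin (n + 1) → ℝ,
      (∑ α : Fin k → Fin (n + 1), A α * ∏ i, x (α i)) *
        (∑ μ : Fin (n + 1), ∑ ν : Fin (n + 1), etaM n μ ν * (x μ * x ν)) = 0 := by
    intro x
    have hR : ∀ σ : Equiv.Perm (Fin (k + 2)),
        (∑ β : Fin (k + 2) → Fin (n + 1),
          (A (fun i : Fin k => β (σ (Fin.castAdd 2 i))) *
            etaM n (β (σ ⟨k, by omega⟩)) (β (σ ⟨k + 1, by omega⟩))) * ∏ j, x (β j))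
        = ∑ γ : Fin (k + 2) → Fin (n + 1),
          (A (fun i : Fin k => γ (Fin.castAdd 2 i)) *
            etaM n (γ ⟨k, by omega⟩) (γ ⟨k + 1, by omega⟩)) * ∏ j, x (γ j) := by
      intro σ
      apply Fintype.sum_equiv (Equiv.arrowCongr σ.symm (Equiv.refl (Fin (n + 1))))
      intro β
      simp only [Equiv.arrowCongr_apply, Equiv.coe_refl, Equiv.symm_symm, Function.comp,
        Function.comp_apply, id_eq]
      rw [← Equiv.prod_comp σ fun j => x (β j)]
    have S0 : ∑ β : Fin (k + 2) → Fin (n + 1),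
        (∑ σ : Equiv.Perm (Fin (k + 2)),
          A (fun i : Fin k => β (σ (Fin.castAdd 2 i))) *
            etaM n (β (σ ⟨k, by omega⟩)) (β (σ ⟨k + 1, by omega⟩))) * ∏ j, x (β j) = 0 :=
      Finset.sum_eq_zero fun β _ => by rw [h β, zero_mul]
    simp only [Finset.sum_mul] at S0
    rw [Finset.sum_comm] at S0
    rw [Finset.sum_congr rfl fun σ _ => hR σ, Finset.sum_const, Finset.card_univ,
      nsmul_eq_mul] at S0
    have hcard : (0 : ℝ) < (Fintype.card (Equiv.Perm (Fin (k + 2))) : ℝ) := by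
      exact_mod_cast Fintype.card_pos
    have hRzero : ∑ γ : Fin (k + 2) → Fin (n + 1),
        (A (fun i : Fin k => γ (Fin.castAdd 2 i)) *
          etaM n (γ ⟨k, by omega⟩) (γ ⟨k + 1, by omega⟩)) * ∏ j, x (γ j) = 0 := by
      rcases mul_eq_zero.mp S0 with h' | h'
      · exact absurd h' (ne_of_gt hcard)
      · exact h'
    -- now factor the sum
    rw [← hRzero]
    -- LHS = p x * q x ; turn into triple sum
    let e3 : (Fin (n + 1) × Fin (n + 1) × (Fin k → Fin (n + 1))) ≃ (Fin (k + 2) → Fin (n + 1)) :=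
      (Equiv.prodCongr (Equiv.refl (Fin (n + 1))) (Fin.snocEquiv (fun _ => Fin (n + 1)))).trans
        (Fin.snocEquiv (fun _ => Fin (n + 1)))
    rw [← Fintype.sum_equiv e3
      (fun p => (A (fun i : Fin k => e3 p (Fin.castAdd 2 i)) *
          etaM n (e3 p ⟨k, by omega⟩) (e3 p ⟨k + 1, by omega⟩)) * ∏ j, x (e3 p j))
      _ (fun p => rfl)]
    rw [Fintype.sum_prod_type]
    simp only [e3, Equiv.trans_apply, Equiv.prodCongr_apply, Equiv.coe_refl, Prod.map,
      Fin.snocEquiv_apply, id_eq]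
    simp only [Fintype.sum_prod_type]
    simp only [Fin.snocEquiv_apply, castAdd_two_eq, mk_k_eq, mk_k1_eq, Fin.snoc_castSucc,
      Fin.snoc_last, Fin.prod_univ_castSucc]
    rw [sum_factor (fun α => A α * ∏ i, x (α i)) (fun μ ν => etaM n μ ν * (x μ * x ν))]
    exact Finset.sum_congr rfl fun ν _ => Finset.sum_congr rfl fun μ _ =>
      Finset.sum_congr rfl fun α _ => by ring
  -- Step 2: polynomial identity
  let P : MvPolynomial (Fin (n + 1)) ℝ :=
    ∑ α : Fin k → Fin (n + 1), MvPolynomial.C (A α) * ∏ i, MvPolynomial.X (α i)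
  let Q : MvPolynomial (Fin (n + 1)) ℝ :=
    ∑ μ : Fin (n + 1), ∑ ν : Fin (n + 1),
      MvPolynomial.C (etaM n μ ν) * (MvPolynomial.X μ * MvPolynomial.X ν)
  have hPQ : P * Q = 0 := by
    apply MvPolynomial.funext
    intro x
    rw [map_mul, map_zero]
    have eP : MvPolynomial.eval x P = ∑ α : Fin k → Fin (n + 1), A α * ∏ i, x (α i) := by
      simp [P, map_sum, map_prod]
    have eQ : MvPolynomial.eval x Q
        = ∑ μ : Fin (n + 1), ∑ ν : Fin (n + 1), etaM n μ ν * (x μ * x ν) := by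
      simp [Q, map_sum]
    rw [eP, eQ, key x]
  have h10 : (1 : Fin (n + 1)) ≠ 0 := by
    intro h0
    have := congrArg Fin.val h0
    rw [Fin.val_one'] at this
    simp only [Fin.val_zero] at this
    have : 1 % (n + 1) = 1 := Nat.mod_eq_of_lt (by omega)
    omega
  have hQ : Q ≠ 0 := by
    intro h0
    have hev := congrArg (MvPolynomial.eval (fun μ : Fin (n + 1) => if μ = 1 then (1 : ℝ) else 0)) h0
    rw [map_zero] at hev
    have : MvPolynomial.eval (fun μ : Fin (n + 1) => if μ = 1 then (1 : ℝ) else 0) Q = 1 := by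
      simp [Q, map_sum, mul_ite, mul_one, mul_zero, Finset.sum_ite_eq', etaM, h10]
    rw [this] at hev
    exact one_ne_zero hev
  have hP : P = 0 := (mul_eq_zero.mp hPQ).resolve_right hQ
  -- Step 3: extract coefficients
  intro α₀
  let m : (Fin k → Fin (n + 1)) → (Fin (n + 1) →₀ ℕ) := fun α => ∑ i, Finsupp.single (α i) 1
  have hcoeff : MvPolynomial.coeff (m α₀) P
      = ∑ α : Fin k → Fin (n + 1), if m α = m α₀ then A α else 0 := by
    rw [MvPolynomial.coeff_sum]
    refine Finset.sum_congr rfl fun α _ => ?_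
    rw [prodX_eq_monomial, MvPolynomial.C_mul_monomial, mul_one, MvPolynomial.coeff_monomial]
  have hmcard : ∀ α : Fin k → Fin (n + 1), ∀ μ, (m α) μ
      = Fintype.card {i // α i = μ} := by
    intro α μ
    rw [Finsupp.finset_sum_apply, Fintype.card_subtype, Finset.card_filter]
    simp [Finsupp.single_apply]
  have hAeq : ∀ α : Fin k → Fin (n + 1), m α = m α₀ → A α = A α₀ := by
    intro α hm
    have hfib : ∀ μ, Fintype.card {i // α i = μ} = Fintype.card {i // α₀ i = μ} := by
      intro μ
      rw [← hmcard α μ, ← hmcard α₀ μ, hm]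
    let e : ∀ μ, {i // α i = μ} ≃ {i // α₀ i = μ} := fun μ => Fintype.equivOfCardEq (hfib μ)
    have hσ : ∀ i, α₀ (Equiv.ofFiberEquiv e i) = α i := fun i => Equiv.ofFiberEquiv_map e i
    calc A α = A (α₀ ∘ (Equiv.ofFiberEquiv e)) := by
          congr 1; funext i; exact (hσ i).symm
      _ = A α₀ := hsymm _ _
  have hzero : (0 : ℝ) = ((Finset.univ.filter
      (fun α : Fin k → Fin (n + 1) => m α = m α₀)).card : ℝ) * A α₀ := by
    have h0 : MvPolynomial.coeff (m α₀) P = 0 := by rw [hP, MvPolynomial.coeff_zero]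
    rw [← h0, hcoeff, Finset.sum_ite, Finset.sum_const_zero, add_zero]
    rw [Finset.sum_congr rfl fun α hα => hAeq α (Finset.mem_filter.mp hα).2]
    rw [Finset.sum_const, nsmul_eq_mul]
  have hpos : 0 < (Finset.univ.filter
      (fun α : Fin k → Fin (n + 1) => m α = m α₀)).card :=
    Finset.card_pos.mpr ⟨α₀, Finset.mem_filter.mpr ⟨Finset.mem_univ _, rfl⟩⟩
  have hcne : ((Finset.univ.filter
      (fun α : Fin k → Fin (n + 1) => m α = m α₀)).card : ℝ) ≠ 0 := by
    exact_mod_cast hpos.ne'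
  exact (mul_eq_zero.mp hzero.symm).resolve_left hcne
end

section
/- Let n ≥ 1, let k ∈ ℕ ∪ {∞}, and let f : ℝ^{n+1} → ℝ be C^k on a neighborhood of 0. Then there exist ε > 0 and a C^k function F defined on a neighborhood of 0 in ℝ^{n+1} such that for every ⃗y ∈ ℝ^n with 0 < |⃗y| < ε, F(|⃗y|, ⃗y) = |⃗y|^{−1} ∫₀^{|⃗y|} f(s, s⃗y/|⃗y|) ds. -/
open MeasureTheory Metric Set
open scoped Convolution

/-- let `f : ℝ^{n+1} = ℝ × ℝ^n → ℝ` be `C^k` near `0` (`k ∈ ℕ ∪ {∞}`). Then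
the radial average on the light-cone `⃗y ↦ |⃗y|⁻¹ ∫₀^{|⃗y|} f(s, s⃗y/|⃗y|) ds` is
`C^k`-cone differentiable: it agrees, near the vertex, with the cone-restriction of a `C^k`
function `F` on ℝ^{n+1}. -/
theorem cone_radial_average_coneSmooth (n : ℕ) (hn : 1 ≤ n) (k : ℕ∞)
    (f : ℝ × EuclideanSpace ℝ (Fin n) → ℝ)
    (U : Set (ℝ × EuclideanSpace ℝ (Fin n))) (hU : IsOpen U) (h0U : (0, 0) ∈ U)
    (hf : ContDiffOn ℝ k f U) :
    ∃ ε > (0 : ℝ), ∃ F : ℝ × EuclideanSpace ℝ (Fin n) → ℝ,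
      ∃ V : Set (ℝ × EuclideanSpace ℝ (Fin n)),
        IsOpen V ∧ (0, 0) ∈ V ∧ ContDiffOn ℝ k F V ∧
        ∀ y : EuclideanSpace ℝ (Fin n), 0 < ‖y‖ → ‖y‖ < ε →
          F (‖y‖, y) = ‖y‖⁻¹ * ∫ s in (0 : ℝ)..‖y‖, f (s, (s / ‖y‖) • y) := by

  obtain ⟨η, hη, hball⟩ := Metric.isOpen_iff.1 hU _ h0U
  set δ := η / 3 with hδ
  have hδ0 : 0 < δ := by positivity
  have hcb : closedBall (0 : ℝ × EuclideanSpace ℝ (Fin n)) (2 * δ) ⊆ U := by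
    refine subset_trans ?_ hball
    intro x hx
    simp only [mem_closedBall, mem_ball] at hx ⊢
    have h00 : (0,0) = (0 : ℝ × EuclideanSpace ℝ (Fin n)) := rfl
    rw [h00]
    linarith
  set φ : ContDiffBump (0 : ℝ × EuclideanSpace ℝ (Fin n)) := ⟨δ, 2*δ, hδ0, by linarith⟩
  set h : ℝ × EuclideanSpace ℝ (Fin n) → ℝ := fun x => φ x * f x with hh
  have hhC : ContDiff ℝ k h := by
    rw [contDiff_iff_contDiffAt]
    intro x
    by_cases hx : x ∈ U
    · exact ((φ.contDiff (n := k)).contDiffAt).mul (hf.contDiffAt (hU.mem_nhds hx))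
    · have hxo : x ∈ (closedBall (0 : ℝ × EuclideanSpace ℝ (Fin n)) (2*δ))ᶜ :=
        fun hc => hx (hcb hc)
      refine (contDiffAt_const (c := 0)).congr_of_eventuallyEq ?_
      filter_upwards [(Metric.isClosed_closedBall.isOpen_compl).mem_nhds hxo] with z hz
      have : φ z = 0 := φ.zero_of_le_dist (le_of_lt (by simpa [dist_eq_norm, not_lt] using hz))
      simp [hh, this]
  have hhf : ∀ x ∈ closedBall (0 : ℝ × EuclideanSpace ℝ (Fin n)) δ, h x = f x := by
    intro x hx
    simp [hh, φ.one_of_mem_closedBall hx]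
  -- the cutoff in the t variable
  set χ : ContDiffBump (0 : ℝ) := ⟨2, 3, two_pos, by norm_num⟩
  set g : (ℝ × EuclideanSpace ℝ (Fin n)) → ℝ → ℝ := fun p t => χ t * h ((-t) • p) with hg
  set f₀ : ℝ → ℝ := (Icc (0:ℝ) 1).indicator (fun _ => (1:ℝ)) with hf₀
  set F : ℝ × EuclideanSpace ℝ (Fin n) → ℝ := fun p => (f₀ ⋆[ContinuousLinearMap.mul ℝ ℝ, volume] g p) 0 with hF
  have hFC : ContDiffOn ℝ k F univ := by
    have hint : LocallyIntegrable f₀ volume := by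
      refine Integrable.locallyIntegrable ?_
      rw [hf₀, integrable_indicator_iff measurableSet_Icc]
      exact integrableOn_const measure_Icc_lt_top.ne
    have hgs : ∀ p, ∀ t : ℝ, p ∈ (univ : Set (ℝ × EuclideanSpace ℝ (Fin n))) →
        t ∉ Icc (-3:ℝ) 3 → g p t = 0 := by
      intro p t _ ht
      have : χ t = 0 := by
        refine χ.zero_of_le_dist (show (3:ℝ) ≤ dist t 0 from ?_)
        simp only [mem_Icc, not_and_or, not_le] at ht
        rw [Real.dist_eq, sub_zero]
        rcases ht with ht | ht
        · rw [abs_of_neg (by linarith)]; linarith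
        · rw [abs_of_pos (by linarith)]; linarith
      simp [hg, this]
    have hgc : ContDiffOn ℝ k (↿g) ((univ : Set (ℝ × EuclideanSpace ℝ (Fin n))) ×ˢ univ) := by
      refine ContDiff.contDiffOn ?_
      exact ((χ.contDiff (n := k)).comp contDiff_snd).mul
        (hhC.comp ((contDiff_snd.neg).smul contDiff_fst))
    exact contDiffOn_convolution_right_with_param_comp (ContinuousLinearMap.mul ℝ ℝ) contDiffOn_const isOpen_univ
      isCompact_Icc hgs hint hgc
  refine ⟨δ, hδ0, F, univ, isOpen_univ, mem_univ _, hFC, ?_⟩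
  intro y hy0 hyδ
  set r := ‖y‖
  have hr : r ≠ 0 := ne_of_gt hy0
  set p : ℝ × EuclideanSpace ℝ (Fin n) := (r, y) with hp
  have hpnorm : ‖p‖ = r := by
    rw [hp, Prod.norm_def]
    simp [Real.norm_eq_abs, abs_of_pos hy0]
    exact le_rfl
  -- step 1 : F p as an interval integral
  have step1 : F p = ∫ t in (0:ℝ)..1, f (t • p) := by
    show (f₀ ⋆[ContinuousLinearMap.mul ℝ ℝ, volume] g p) 0 = _
    rw [convolution_def]
    have e1 : ∀ t : ℝ, (ContinuousLinearMap.mul ℝ ℝ) (f₀ t) (g p (0 - t)) = (Icc (0:ℝ) 1).indicator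
        (fun t => χ (-t) * h (t • p)) t := by
      intro t
      by_cases hmem : t ∈ Icc (0:ℝ) 1 <;>
        simp [hf₀, hg, Set.indicator_of_mem, Set.indicator_of_notMem, hmem, neg_neg,
          ContinuousLinearMap.mul_apply', zero_sub]
    simp_rw [e1]
    rw [integral_indicator measurableSet_Icc, integral_Icc_eq_integral_Ioc,
      ← intervalIntegral.integral_of_le zero_le_one]
    refine intervalIntegral.integral_congr ?_
    intro t ht
    rw [Set.uIcc_of_le zero_le_one, mem_Icc] at ht
    have hχ : χ (-t) = 1 := by
      refine χ.one_of_mem_closedBall (show dist (-t) (0:ℝ) ≤ (2:ℝ) from ?_)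
      rw [Real.dist_eq, sub_zero, abs_neg, abs_of_nonneg ht.1]
      linarith [ht.2]
    have hhf' : h (t • p) = f (t • p) := by
      refine hhf _ ?_
      rw [mem_closedBall, dist_zero_right, norm_smul, hpnorm]
      have : |t| * r ≤ 1 * r := by
        apply mul_le_mul_of_nonneg_right _ hy0.le
        rw [abs_of_nonneg ht.1]; exact ht.2
      rw [Real.norm_eq_abs]
      linarith
    show χ (-t) * h (t • p) = f (t • p)
    rw [hχ, hhf', one_mul]
  -- step 2 : change of variables in the target integral
  have step2 : (∫ t in (0:ℝ)..1, f (t • p)) = r⁻¹ * ∫ s in (0:ℝ)..r, f (s, (s / r) • y) := by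
    have := intervalIntegral.integral_comp_mul_right (fun s => f (s, (s / r) • y)) hr
      (a := 0) (b := 1)
    rw [zero_mul, one_mul, smul_eq_mul] at this
    rw [← this]
    refine intervalIntegral.integral_congr ?_
    intro t _
    show f (t • p) = f (t * r, (t * r / r) • y)
    have : t • p = (t * r, (t * r / r) • y) := by
      rw [hp, Prod.smul_mk, mul_div_cancel_right₀ _ hr]
      simp [smul_eq_mul]
    rw [this]
  rw [step1, step2]
end

section
/- Let k ∈ ℕ, r₀ > 0, and let κ, c : [0, r₀] → ℝ be C^k functions with κ(0) = 0. Suppose y : [0, r₀] → ℝ is C¹ with y(0) = 0 and y′(r) = 1 + κ(r)·y(r) + c(r)·y(r)² for all r ∈ [0, r₀]. Then the function z : [0, r₀] → ℝ defined by z(0) = 1 and z(r) = y(r)/r for r ∈ (0, r₀] is C^k on [0, r₀]. -/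
open Set intervalIntegral MeasureTheory Filter Topology

lemma mem_aux {r₀ t r : ℝ} (ht : t ∈ Icc (0:ℝ) 1) (hr : r ∈ Icc 0 r₀) :
    t * r ∈ Icc 0 r₀ :=
  ⟨mul_nonneg ht.1 hr.1, (mul_le_of_le_one_left hr.1 ht.2).trans hr.2⟩

lemma hadamard_cont {r₀ : ℝ} (hr₀ : 0 < r₀) {w : ℝ → ℝ} (hw : ContinuousOn w (Icc 0 r₀))
    (j : ℕ) :
    ContinuousOn (fun r => ∫ t in (0:ℝ)..1, t ^ j * w (t * r)) (Icc 0 r₀) := by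
  set W : ℝ → ℝ := fun s => w (min (max s 0) r₀) with hWdef
  have hmem : ∀ s : ℝ, min (max s 0) r₀ ∈ Icc (0:ℝ) r₀ :=
    fun s => ⟨le_min (le_max_right s 0) hr₀.le, min_le_right _ _⟩
  have hW : Continuous W := hw.comp_continuous (by continuity) hmem
  have hcont : Continuous fun r : ℝ => ∫ t in (0:ℝ)..1, t ^ j * W (t * r) := by
    apply intervalIntegral.continuous_parametric_intervalIntegral_of_continuous'
      (f := fun (x : ℝ) (t : ℝ) => t ^ j * W (t * x)) (μ := volume)
    exact ((continuous_snd.pow j).mul (hW.comp (continuous_snd.mul continuous_fst)))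
  refine hcont.continuousOn.congr fun r hr => ?_
  refine intervalIntegral.integral_congr fun t ht => ?_
  rw [uIcc_of_le zero_le_one] at ht
  have htr := mem_aux ht hr
  simp only [hWdef, max_eq_left htr.1, min_eq_left htr.2]

lemma contOn_aux {r₀ : ℝ} {v : ℝ → ℝ} (hv : ContinuousOn v (Icc 0 r₀)) (m : ℕ)
    {x : ℝ} (hx : x ∈ Icc (0:ℝ) r₀) :
    ContinuousOn (fun t : ℝ => t ^ m * v (t * x)) (Icc 0 1) := by
  refine ((continuousOn_pow m).mul (hv.comp ?_ ?_))
  · exact (continuous_mul_right x).continuousOn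
  · exact fun t ht => mem_aux ht hx

lemma hadamard_hasDerivAt {r₀ : ℝ} (hr₀ : 0 < r₀) {w : ℝ → ℝ}
    (hw : ContDiffOn ℝ 1 w (Icc 0 r₀)) (j : ℕ) {x₀ : ℝ} (hx₀ : x₀ ∈ Ioo 0 r₀) :
    HasDerivAt (fun r => ∫ t in (0:ℝ)..1, t ^ j * w (t * r))
      (∫ t in (0:ℝ)..1, t ^ (j+1) * derivWithin w (Icc 0 r₀) (t * x₀)) x₀ := by
  set u : ℝ → ℝ := derivWithin w (Icc 0 r₀) with hu
  have hwc : ContinuousOn w (Icc 0 r₀) := hw.continuousOn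
  have huc : ContinuousOn u (Icc 0 r₀) := hw.continuousOn_derivWithin (uniqueDiffOn_Icc hr₀) le_rfl
  obtain ⟨M, hM⟩ := isCompact_Icc.exists_bound_of_continuousOn huc
  set ε : ℝ := min x₀ (r₀ - x₀) with hε
  have hεpos : 0 < ε := lt_min hx₀.1 (sub_pos.2 hx₀.2)
  have hball : Metric.ball x₀ ε ⊆ Ioo 0 r₀ := by
    intro x hx
    rw [Metric.mem_ball, Real.dist_eq, abs_lt] at hx
    constructor
    · nlinarith [min_le_left x₀ (r₀ - x₀)]
    · nlinarith [min_le_right x₀ (r₀ - x₀)]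
  have key := intervalIntegral.hasDerivAt_integral_of_dominated_loc_of_deriv_le
      (F := fun (x : ℝ) (t : ℝ) => t ^ j * w (t * x))
      (F' := fun (x : ℝ) (t : ℝ) => t ^ (j+1) * u (t * x))
      (bound := fun _ => M) (μ := volume) (a := 0) (b := 1) (x₀ := x₀) (Metric.ball_mem_nhds x₀ hεpos) ?_ ?_ ?_ ?_ ?_ ?_
  · exact key.2
  · -- measurability of F x for x near x₀
    filter_upwards [Metric.ball_mem_nhds x₀ hεpos] with x hx
    have hxI : x ∈ Icc (0:ℝ) r₀ := Ioo_subset_Icc_self (hball hx)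
    exact ((contOn_aux hwc j hxI).mono (by rw [uIoc_of_le zero_le_one]; exact Ioc_subset_Icc_self)
      ).aestronglyMeasurable measurableSet_uIoc
  · have := (contOn_aux hwc j (Ioo_subset_Icc_self hx₀))
    rw [show Icc (0:ℝ) 1 = uIcc (0:ℝ) 1 from (uIcc_of_le zero_le_one).symm] at this
    exact this.intervalIntegrable
  · exact ((contOn_aux huc (j+1) (Ioo_subset_Icc_self hx₀)).mono
      (by rw [uIoc_of_le zero_le_one]; exact Ioc_subset_Icc_self)
      ).aestronglyMeasurable measurableSet_uIoc
  · -- bound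
    refine .of_forall fun t ht x hx => ?_
    rw [uIoc_of_le zero_le_one] at ht
    have htI : t ∈ Icc (0:ℝ) 1 := Ioc_subset_Icc_self ht
    have hxI : x ∈ Icc (0:ℝ) r₀ := Ioo_subset_Icc_self (hball hx)
    have htx : t * x ∈ Icc (0:ℝ) r₀ := mem_aux htI hxI
    have h1 : ‖t ^ (j+1) * u (t * x)‖ = |t| ^ (j+1) * ‖u (t * x)‖ := by
      rw [norm_mul, norm_pow]; rfl
    rw [h1]
    have ht1 : |t| ^ (j+1) ≤ 1 := by
      rw [abs_of_nonneg htI.1]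
      exact pow_le_one₀ htI.1 htI.2
    calc |t| ^ (j+1) * ‖u (t * x)‖ ≤ 1 * M :=
          mul_le_mul ht1 (hM _ htx) (norm_nonneg _) zero_le_one
      _ = M := one_mul M
  · exact intervalIntegrable_const
  · -- differentiability in x
    refine .of_forall fun t ht x hx => ?_
    rw [uIoc_of_le zero_le_one] at ht
    have hxO : x ∈ Ioo (0:ℝ) r₀ := hball hx
    have htx : t * x ∈ Ioo (0:ℝ) r₀ :=
      ⟨mul_pos ht.1 hxO.1, lt_of_le_of_lt (mul_le_of_le_one_left hxO.1.le ht.2) hxO.2⟩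
    have hnhds : Icc (0:ℝ) r₀ ∈ nhds (t * x) := Icc_mem_nhds htx.1 htx.2
    have hd : DifferentiableAt ℝ w (t * x) :=
      ((hw.differentiableOn one_ne_zero) (t * x) (Ioo_subset_Icc_self htx)).differentiableAt hnhds
    have hval : u (t * x) = deriv w (t * x) := derivWithin_of_mem_nhds hnhds
    have hin : HasDerivAt (fun x : ℝ => t * x) t x := by
      simpa using (hasDerivAt_id x).const_mul t
    have h2 : HasDerivAt (fun x : ℝ => w (t * x)) (deriv w (t * x) * t) x :=
      hd.hasDerivAt.comp x hin
    have h3 := h2.const_mul (t ^ j)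
    convert h3 using 1
    show t ^ (j+1) * u (t*x) = _
    rw [hval]; ring
    rfl

lemma hadamard_main {r₀ : ℝ} (hr₀ : 0 < r₀) :
    ∀ (n : ℕ) (w : ℝ → ℝ), ContDiffOn ℝ (n : ℕ∞) w (Icc 0 r₀) → ∀ j : ℕ,
      ContDiffOn ℝ (n : ℕ∞) (fun r => ∫ t in (0:ℝ)..1, t ^ j * w (t * r)) (Icc 0 r₀) := by
  intro n
  induction n with
  | zero =>
    intro w hw j
    simp only [Nat.cast_zero, WithTop.coe_zero, contDiffOn_zero]
    exact hadamard_cont hr₀ hw.continuousOn j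
  | succ n ih =>
    intro w hw j
    have hUD := uniqueDiffOn_Icc hr₀
    set u : ℝ → ℝ := derivWithin w (Icc 0 r₀) with hudef
    have hw1 : ContDiffOn ℝ 1 w (Icc 0 r₀) := hw.of_le (by exact_mod_cast Nat.one_le_iff_ne_zero.2 (Nat.succ_ne_zero n))
    have hu : ContDiffOn ℝ (n : ℕ∞) u (Icc 0 r₀) := hw.derivWithin hUD (by push_cast; exact le_rfl)
    have huc : ContinuousOn u (Icc 0 r₀) := hu.continuousOn
    set g : ℝ → ℝ := fun r => ∫ t in (0:ℝ)..1, t ^ j * w (t * r) with hgdef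
    set G : ℝ → ℝ := fun r => ∫ t in (0:ℝ)..1, t ^ (j+1) * u (t * r) with hGdef
    have hint : ∀ x ∈ Ioo (0:ℝ) r₀, HasDerivAt g (G x) x := fun x hx =>
      hadamard_hasDerivAt hr₀ hw1 j hx
    have hdiffo : DifferentiableOn ℝ g (Ioo 0 r₀) := fun x hx =>
      (hint x hx).differentiableAt.differentiableWithinAt
    have hGcont : ContinuousOn G (Icc 0 r₀) := hadamard_cont hr₀ huc (j+1)
    have hgcont : ContinuousOn g (Icc 0 r₀) := hadamard_cont hr₀ hw.continuousOn j
    have hderiv : ∀ r ∈ Icc (0:ℝ) r₀, HasDerivWithinAt g (G r) (Icc 0 r₀) r := by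
      intro r hr
      rcases eq_or_lt_of_le hr.1 with h0 | h0
      · -- r = 0
        have hs0 : Ioo (0:ℝ) r₀ ∈ 𝓝[>] (0:ℝ) := Ioo_mem_nhdsGT_of_mem ⟨le_rfl, hr₀⟩
        have hlim : Tendsto (deriv g) (𝓝[>] (0:ℝ)) (𝓝 (G 0)) := by
          have h1 : Tendsto G (𝓝[>] (0:ℝ)) (𝓝 (G 0)) :=
            ((hGcont 0 ⟨le_rfl, hr₀.le⟩).mono Ioo_subset_Icc_self).tendsto.mono_left
              (nhdsWithin_le_of_mem hs0)
          refine h1.congr' ?_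
          filter_upwards [hs0] with x hx
          exact ((hint x hx).deriv).symm
        rw [← h0]
        exact (hasDerivWithinAt_Ici_of_tendsto_deriv hdiffo
          ((hgcont 0 ⟨le_rfl, hr₀.le⟩).mono Ioo_subset_Icc_self) hs0 hlim).mono
          (Icc_subset_Ici_self : Icc (0:ℝ) r₀ ⊆ Ici 0)
      rcases eq_or_lt_of_le hr.2 with h1 | h1
      · -- r = r₀
        subst h1
        have hs0 : Ioo (0:ℝ) r ∈ 𝓝[<] r := Ioo_mem_nhdsLT_of_mem ⟨h0, le_rfl⟩
        have hlim : Tendsto (deriv g) (𝓝[<] r) (𝓝 (G r)) := by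
          have h2 : Tendsto G (𝓝[<] r) (𝓝 (G r)) :=
            ((hGcont r hr).mono Ioo_subset_Icc_self).tendsto.mono_left
              (nhdsWithin_le_of_mem hs0)
          refine h2.congr' ?_
          filter_upwards [hs0] with x hx
          exact ((hint x hx).deriv).symm
        exact (hasDerivWithinAt_Iic_of_tendsto_deriv hdiffo
          ((hgcont r hr).mono Ioo_subset_Icc_self) hs0 hlim).mono (Icc_subset_Iic_self (a := (0:ℝ)))
      · exact (hint r ⟨h0, h1⟩).hasDerivWithinAt
    have hdo : DifferentiableOn ℝ g (Icc 0 r₀) := fun r hr =>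
      (hderiv r hr).differentiableWithinAt
    have heq : EqOn (derivWithin g (Icc 0 r₀)) G (Icc 0 r₀) := fun r hr =>
      (hderiv r hr).derivWithin (hUD r hr)
    have key : ContDiffOn ℝ ((n : ℕ∞) + 1) g (Icc 0 r₀) :=
      (contDiffOn_succ_iff_derivWithin hUD).2 ⟨hdo, by simp, (ih u hu (j+1)).congr heq⟩
    exact_mod_cast key


/-- regularity of `y/r` for the radial Raychaudhuri-type ODE: if
`κ, c : [0, r₀] → ℝ` are `C^k` with `κ(0) = 0`, and `y` is `C¹` on `[0, r₀]` with `y(0) = 0`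
and `y′ = 1 + κ·y + c·y²`, then the function equal to `y(r)/r` for `r > 0` and to `1` at
`r = 0` is `C^k` on `[0, r₀]`. -/
theorem raychaudhuri_y_div_r_contDiff (k : ℕ) (r₀ : ℝ) (hr₀ : 0 < r₀)
    (κ c : ℝ → ℝ)
    (hκ : ContDiffOn ℝ (k : ℕ∞) κ (Icc 0 r₀))
    (hc : ContDiffOn ℝ (k : ℕ∞) c (Icc 0 r₀))
    (hκ0 : κ 0 = 0)
    (y : ℝ → ℝ)
    (hy : ContDiffOn ℝ 1 y (Icc 0 r₀))
    (hy0 : y 0 = 0)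
    (hode : ∀ r ∈ Icc (0 : ℝ) r₀,
      HasDerivWithinAt y (1 + κ r * y r + c r * y r ^ 2) (Icc 0 r₀) r) :
    ContDiffOn ℝ (k : ℕ∞) (fun r : ℝ => if r = 0 then 1 else y r / r) (Icc 0 r₀) := by
  have hUD := uniqueDiffOn_Icc hr₀
  set u : ℝ → ℝ := derivWithin y (Icc 0 r₀) with hudef
  have huv : EqOn u (fun r => 1 + κ r * y r + c r * y r ^ 2) (Icc 0 r₀) :=
    fun r hr => (hode r hr).derivWithin (hUD r hr)
  have boot : ∀ j : ℕ, j ≤ k + 1 → ContDiffOn ℝ (j : ℕ∞) y (Icc 0 r₀) := by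
    intro j
    induction j with
    | zero =>
      intro _
      exact hy.of_le (by simp)
    | succ j ihj =>
      intro hj1
      have hjk : j ≤ k := Nat.succ_le_succ_iff.mp hj1
      have hyj : ContDiffOn ℝ (j : ℕ∞) y (Icc 0 r₀) :=
        ihj (hjk.trans (Nat.le_succ k))
      have hcast : ((j : ℕ∞) : WithTop ℕ∞) ≤ ((k : ℕ∞) : WithTop ℕ∞) := by
        exact_mod_cast hjk
      have hvj : ContDiffOn ℝ (j : ℕ∞) (fun r => 1 + κ r * y r + c r * y r ^ 2)
          (Icc 0 r₀) :=
        (contDiffOn_const.add ((hκ.of_le hcast).mul hyj)).add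
          ((hc.of_le hcast).mul (hyj.pow 2))
      have huj : ContDiffOn ℝ (j : ℕ∞) u (Icc 0 r₀) := hvj.congr huv
      have key : ContDiffOn ℝ ((j : ℕ∞) + 1) y (Icc 0 r₀) :=
        (contDiffOn_succ_iff_derivWithin hUD).2
          ⟨hy.differentiableOn one_ne_zero, by simp, huj⟩
      exact_mod_cast key
  have hyk1 : ContDiffOn ℝ ((k + 1 : ℕ) : ℕ∞) y (Icc 0 r₀) := boot (k + 1) le_rfl
  have hu : ContDiffOn ℝ (k : ℕ∞) u (Icc 0 r₀) :=
    hyk1.derivWithin hUD (by exact_mod_cast le_rfl)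
  have huc : ContinuousOn u (Icc 0 r₀) := hu.continuousOn
  have hG := hadamard_main hr₀ k u hu 0
  refine hG.congr ?_
  intro r hr
  by_cases h0 : r = 0
  · subst h0
    have hu0 : u 0 = 1 := by
      have h1 := huv (left_mem_Icc.2 hr₀.le)
      simp only [hκ0, hy0] at h1
      simpa using h1
    simp [hu0]
  · have h0' : 0 < r := lt_of_le_of_ne hr.1 (Ne.symm h0)
    simp only [if_neg h0]
    have hcomp : (∫ t in (0:ℝ)..1, t ^ 0 * u (t * r)) = r⁻¹ * ∫ s in (0:ℝ)..r, u s := by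
      simp only [pow_zero, one_mul]
      rw [intervalIntegral.integral_comp_mul_right u (ne_of_gt h0')]
      simp [smul_eq_mul]
    have hFTC : (∫ s in (0:ℝ)..r, u s) = y r - y 0 := by
      apply intervalIntegral.integral_eq_sub_of_hasDeriv_right_of_le h0'.le
      · exact hy.continuousOn.mono (Icc_subset_Icc le_rfl hr.2)
      · intro x hx
        have hxI : x ∈ Ioo 0 r₀ := ⟨hx.1, lt_of_lt_of_le hx.2 hr.2⟩
        have hmem : Icc (0:ℝ) r₀ ∈ nhds x := Icc_mem_nhds hxI.1 hxI.2
        rw [huv (Ioo_subset_Icc_self hxI)]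
        exact ((hode x (Ioo_subset_Icc_self hxI)).hasDerivAt hmem).hasDerivWithinAt
      · have hc2 := huc.mono (Icc_subset_Icc le_rfl hr.2)
        rw [show Icc (0:ℝ) r = uIcc (0:ℝ) r from (uIcc_of_le h0'.le).symm] at hc2
        exact hc2.intervalIntegrable
    rw [hcomp, hFTC, hy0, sub_zero, div_eq_inv_mul]
end
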